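/- For every natural number n, the centered period-4 alternating window sum of row 2n of Pascal's triangle with offset 2 equals 2^n: Σ_{k∈ℤ} [ C(2n, n + 4k) − C(2n, n + 2 + 4k) ] = 2^n. -/

import Mathlib

/-- Binomial coefficient `C(r, j)` with an integer lower index, equal to `0`
when `j < 0` or `j > r`. -/
def zchoose (r : ℕ) (j : ℤ) : ℤ := if 0 ≤ j then (r.choose j.toNat : ℤ) else 0

lemma zchoose_bounds {r : ℕ} {j : ℤ} (h : zchoose r j ≠ 0) : 0 ≤ j ∧ j ≤ r := by
  unfold zchoose at h
  split_ifs at h with h0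
  · refine ⟨h0, ?_⟩
    by_contra hc
    push_neg at hc
    have : r < j.toNat := by omega
    simp [Nat.choose_eq_zero_of_lt this] at h
  · simp at h

lemma zchoose_pascal (r : ℕ) (j : ℤ) :
    zchoose (r + 1) j = zchoose r (j - 1) + zchoose r j := by
  rcases lt_trichotomy j 0 with h | h | h
  · have h1 : ¬ (0:ℤ) ≤ j := by omega
    have h2 : ¬ (0:ℤ) ≤ j - 1 := by omega
    simp only [zchoose, if_neg h1, if_neg h2, add_zero]
  · subst h
    norm_num [zchoose]
  · have h1 : (0:ℤ) ≤ j := le_of_lt h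
    have h2 : (0:ℤ) ≤ j - 1 := by omega
    simp only [zchoose, if_pos h1, if_pos h2]
    have hm : j.toNat = (j - 1).toNat + 1 := by omega
    rw [hm, Nat.choose_succ_succ]
    push_cast; ring

lemma zchoose_two_step (r : ℕ) (j : ℤ) :
    zchoose (r + 2) j = zchoose r (j - 2) + 2 * zchoose r (j - 1) + zchoose r j := by
  rw [show r + 2 = (r + 1) + 1 by ring, zchoose_pascal, zchoose_pascal, zchoose_pascal,
    show j - 1 - 1 = j - 2 by ring]
  ring

lemma supp_fin (r : ℕ) (a : ℤ) :
    (Function.support fun k : ℤ => zchoose r (a + 4 * k)).Finite := by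
  apply Set.Finite.subset (Finset.Icc (-(a.natAbs : ℤ) - r) ((a.natAbs : ℤ) + r)).finite_toSet
  intro k hk
  simp only [Function.mem_support] at hk
  have h := zchoose_bounds hk
  simp only [Finset.coe_Icc, Set.mem_Icc]
  omega

lemma fin_sub {f g : ℤ → ℤ} (hf : (Function.support f).Finite)
    (hg : (Function.support g).Finite) :
    (Function.support fun k => f k - g k).Finite :=
  (hf.union hg).subset fun k hk => by
    simp only [Function.mem_support, Set.mem_union] at *
    by_contra h
    push_neg at h
    exact hk (by rw [h.1, h.2, sub_zero])

lemma fin_shift {f : ℤ → ℤ} (hf : (Function.support f).Finite) :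
    (Function.support fun k => f (k + 1)).Finite := by
  have : (Function.support fun k => f (k + 1)) = (fun k => k + 1) ⁻¹' Function.support f := rfl
  rw [this]
  exact hf.preimage ((add_left_injective (1:ℤ)).injOn)

/-- The centered period-4 alternating window sum of row 2n of Pascal's triangle with
offset 2 equals 2^n. -/
theorem period_four_window_sum_offset_two (n : ℕ) :
    ∑ᶠ k : ℤ, (zchoose (2 * n) (n + 4 * k) - zchoose (2 * n) (n + 2 + 4 * k)) =
      2 ^ n := by
  induction n with
  | zero =>
    rw [finsum_eq_single _ (0 : ℤ)]
    · simp [zchoose]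
    · intro k hk
      have h1 : zchoose (2 * 0) ((0:ℕ) + 4 * k) = 0 := by
        by_contra h
        have := zchoose_bounds h
        omega
      have h2 : zchoose (2 * 0) ((0:ℕ) + 2 + 4 * k) = 0 := by
        by_contra h
        have := zchoose_bounds h
        omega
      rw [h1, h2, sub_zero]
  | succ n ih =>
    set A : ℤ → ℤ := fun k => zchoose (2 * n) ((n : ℤ) - 1 + 4 * k) with hA
    set B : ℤ → ℤ := fun k => zchoose (2 * n) ((n : ℤ) + 4 * k) with hB
    set D : ℤ → ℤ := fun k => zchoose (2 * n) ((n : ℤ) + 2 + 4 * k) with hD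
    have hAf : (Function.support A).Finite := supp_fin _ _
    have hBf : (Function.support B).Finite := supp_fin _ _
    have hDf : (Function.support D).Finite := supp_fin _ _
    have key : ∀ k : ℤ,
        zchoose (2 * (n + 1)) ((n + 1 : ℕ) + 4 * k) -
          zchoose (2 * (n + 1)) ((n + 1 : ℕ) + 2 + 4 * k)
        = 2 * (B k - D k) + (A k - A (k + 1)) := by
      intro k
      have e : 2 * (n + 1) = 2 * n + 2 := by ring
      rw [e]
      push_cast
      rw [zchoose_two_step, zchoose_two_step,
        show (n:ℤ) + 1 + 4 * k - 2 = (n:ℤ) - 1 + 4 * k by ring,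
        show (n:ℤ) + 1 + 4 * k - 1 = (n:ℤ) + 4 * k by ring,
        show (n:ℤ) + 1 + 2 + 4 * k - 2 = (n:ℤ) + 1 + 4 * k by ring,
        show (n:ℤ) + 1 + 2 + 4 * k - 1 = (n:ℤ) + 2 + 4 * k by ring,
        show (n:ℤ) + 1 + 2 + 4 * k = (n:ℤ) - 1 + 4 * (k + 1) by ring]
      simp only [hA, hB, hD]
      ring
    calc ∑ᶠ k : ℤ, (zchoose (2 * (n+1)) ((n + 1 : ℕ) + 4 * k) -
            zchoose (2 * (n+1)) ((n + 1 : ℕ) + 2 + 4 * k))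
        = ∑ᶠ k : ℤ, (2 * (B k - D k) + (A k - A (k + 1))) := by
          exact finsum_congr key
      _ = (∑ᶠ k : ℤ, 2 * (B k - D k)) + ∑ᶠ k : ℤ, (A k - A (k + 1)) := by
          apply finsum_add_distrib
          · apply Set.Finite.subset (fin_sub hBf hDf)
            intro k hk
            simp only [Function.mem_support] at *
            intro h; exact hk (by rw [h, mul_zero])
          · exact fin_sub hAf (fin_shift hAf)
      _ = 2 * (∑ᶠ k : ℤ, (B k - D k)) + ((∑ᶠ k : ℤ, A k) - ∑ᶠ k : ℤ, A (k + 1)) := by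
          rw [finsum_sub_distrib hAf (fin_shift hAf)]
          congr 1
          simpa [smul_eq_mul] using (smul_finsum' (2:ℤ) (fin_sub hBf hDf)).symm
      _ = 2 * 2 ^ n + 0 := by
          rw [ih]
          congr 1
          rw [sub_eq_zero]
          exact (finsum_comp_equiv (Equiv.addRight (1:ℤ))).symm
      _ = 2 ^ (n + 1) := by ring
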